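/- arXiv:1312.2202 — 5 statements merged into one kernel-verified Lean document; each statement's English description precedes it below -/
import Mathlib

section
/- Let V be a finite-dimensional real vector space, Φ a bilinear alternating form on V, θ, ψ ∈ V* linearly independent with a decomposition V = span{t, σ} ⊕ Q where θ(t)=1, θ(σ)=0, ψ(σ)=1, ψ(t)=0 and Q = ker θ ∩ ker ψ. If Ω := -θ∧ψ + Φ with Φ(σ, v) = 0 for all v ∈ V and Ω is nondegenerate on V, then Φ restricted to Q is nondegenerate. -/
/-- If Ω = -θ∧ψ + Φ is nondegenerate on V = span{t,σ} ⊕ (ker θ ∩ ker ψ), with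
Φ alternating and Φ(σ,·) = 0, then Φ restricted to Q = ker θ ∩ ker ψ is
nondegenerate. -/
theorem restricted_form_nondegenerate
    (V : Type) [AddCommGroup V] [Module ℝ V] [FiniteDimensional ℝ V]
    (Φ : V →ₗ[ℝ] V →ₗ[ℝ] ℝ) (hΦalt : ∀ v : V, Φ v v = 0)
    (θ ψ : Module.Dual ℝ V) (hindep : LinearIndependent ℝ ![θ, ψ])
    (t σ : V)
    (hθt : θ t = 1) (hθσ : θ σ = 0) (hψσ : ψ σ = 1) (hψt : ψ t = 0)
    (hdecomp : ∀ v : V, ∃ (a b : ℝ) (q : V), θ q = 0 ∧ ψ q = 0 ∧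
      v = a • t + b • σ + q)
    (hΦσ : ∀ v : V, Φ σ v = 0)
    (hΩnd : ∀ u : V, (∀ v : V, -(θ u * ψ v - θ v * ψ u) + Φ u v = 0) → u = 0) :
    ∀ q : V, θ q = 0 → ψ q = 0 →
      (∀ q' : V, θ q' = 0 → ψ q' = 0 → Φ q q' = 0) → q = 0 := by
  intro q hθq hψq hQ
  -- antisymmetry
  have hanti : ∀ x y : V, Φ x y = -Φ y x := by
    intro x y
    have h := hΦalt (x + y)
    simp only [map_add, LinearMap.add_apply, hΦalt] at h
    linarith
  have hΦqσ : Φ q σ = 0 := by rw [hanti]; simp [hΦσ]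
  set c := Φ q t with hc
  have hu : q - c • σ = 0 := by
    apply hΩnd
    intro v
    obtain ⟨a, b, q', hθq', hψq', hv⟩ := hdecomp v
    have hΦqv : Φ q v = a * c := by
      rw [hv]
      simp [map_add, map_smul, hQ q' hθq' hψq', hΦqσ, mul_comm]
      exact Or.inl hc.symm
    have hθv : θ v = a := by rw [hv]; simp [map_add, map_smul, hθt, hθσ, hθq']
    have hψv : ψ v = b := by rw [hv]; simp [map_add, map_smul, hψt, hψσ, hψq']
    simp only [map_sub, map_smul, LinearMap.sub_apply, LinearMap.smul_apply,
      hθq, hψq, hθσ, hψσ, hΦσ, hΦqv, hθv, hψv, smul_eq_mul]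
    ring
  have hc0 : c = 0 := by
    have := congrArg ψ hu
    simp [map_sub, map_smul, hψq, hψσ] at this
    exact this
  rw [hc0] at hu
  simpa using hu
end

section
/- Let 𝔤 = ℝT ⊕ 𝔰𝔲(2) with T central, brackets [X,Y]=Z, [Y,Z]=X, [Z,X]=Y, dual basis t,x,y,z, and c ≠ 0. Set θ = t and φ = (1/c)x. Then the 2-form Ω = -θ∧φ + dφ satisfies dΩ = θ∧Ω (the locally conformally Kähler equation on the Lie algebra). -/
/-- On 𝔤 = ℝT ⊕ 𝔰𝔲(2) with θ = t, φ = (1/c)x, the 2-form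
Ω = -θ∧φ + dφ satisfies the l.c.K. equation dΩ = θ∧Ω. -/
theorem u2_lck_equation
    (L : Type) [LieRing L] [LieAlgebra ℝ L] (b : Module.Basis (Fin 4) ℝ L)
    (hT : ∀ U : L, ⁅b 0, U⁆ = 0)
    (hXY : ⁅b 1, b 2⁆ = b 3) (hYZ : ⁅b 2, b 3⁆ = b 1) (hZX : ⁅b 3, b 1⁆ = b 2)
    (c : ℝ) (hc : c ≠ 0)
    (θ φ : L → ℝ)
    (hθ : ∀ U : L, θ U = b.coord 0 U)
    (hφ : ∀ U : L, φ U = (1 / c) * b.coord 1 U)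
    (Ω : L → L → ℝ)
    (hΩ : ∀ U V : L, Ω U V = -(θ U * φ V - θ V * φ U) + -(φ ⁅U, V⁆)) :
    ∀ U V W : L,
      -(Ω ⁅U, V⁆ W) + Ω ⁅U, W⁆ V - Ω ⁅V, W⁆ U
        = θ U * Ω V W - θ V * Ω U W + θ W * Ω U V := by
  have hT' : ∀ U : L, ⁅U, b 0⁆ = 0 := by
    intro U; rw [← lie_skew, hT]; simp
  have key : ∀ U V : L, ⁅U, V⁆ =
      (b.coord 2 U * b.coord 3 V - b.coord 3 U * b.coord 2 V) • b 1 +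
      (b.coord 3 U * b.coord 1 V - b.coord 1 U * b.coord 3 V) • b 2 +
      (b.coord 1 U * b.coord 2 V - b.coord 2 U * b.coord 1 V) • b 3 := by
    intro U V
    have hYX : ⁅b 2, b 1⁆ = -b 3 := by rw [← lie_skew, hXY]
    have hZY : ⁅b 3, b 2⁆ = -b 1 := by rw [← lie_skew, hYZ]
    have hXZ : ⁅b 1, b 3⁆ = -b 2 := by rw [← lie_skew, hZX]
    conv_lhs => rw [← b.sum_repr U, ← b.sum_repr V]
    simp only [Fin.sum_univ_four, add_lie, lie_add, smul_lie, lie_smul,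
      hT, hT', hXY, hYZ, hZX, hYX, hZY, hXZ, lie_self, Module.Basis.coord_apply,
      smul_zero, zero_add, add_zero, smul_neg, smul_smul]
    module
  have hcoord : ∀ (i j : Fin 4), b.coord i (b j) = if i = j then 1 else 0 := by
    intro i j
    simp [Module.Basis.coord_apply, Module.Basis.repr_self, Finsupp.single_apply, eq_comm]
  have hco : ∀ (i : Fin 4) (U V : L), b.coord i ⁅U, V⁆ =
      (b.coord 2 U * b.coord 3 V - b.coord 3 U * b.coord 2 V) * b.coord i (b 1) +
      (b.coord 3 U * b.coord 1 V - b.coord 1 U * b.coord 3 V) * b.coord i (b 2) +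
      (b.coord 1 U * b.coord 2 V - b.coord 2 U * b.coord 1 V) * b.coord i (b 3) := by
    intro i U V
    rw [key U V]
    simp only [map_add, map_smul, smul_eq_mul]
  have hco0 : ∀ U V : L, b.coord 0 ⁅U, V⁆ = 0 := by
    intro U V; rw [hco]; simp [hcoord]
  have hco1 : ∀ U V : L, b.coord 1 ⁅U, V⁆ =
      b.coord 2 U * b.coord 3 V - b.coord 3 U * b.coord 2 V := by
    intro U V; rw [hco]; simp [hcoord]
  have hco2 : ∀ U V : L, b.coord 2 ⁅U, V⁆ =
      b.coord 3 U * b.coord 1 V - b.coord 1 U * b.coord 3 V := by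
    intro U V; rw [hco]; simp [hcoord]
  have hco3 : ∀ U V : L, b.coord 3 ⁅U, V⁆ =
      b.coord 1 U * b.coord 2 V - b.coord 2 U * b.coord 1 V := by
    intro U V; rw [hco]; simp [hcoord]
  intro U V W
  simp only [hΩ, hθ, hφ, hco0, hco1, hco2, hco3]
  ring
end

section
/- In 𝔤 = ℝT ⊕ 𝔰𝔲(2) with complex structure J_δ (J(T-dX) = cX, J(cX) = -(T-dX), JY = Z, JZ = -Y, c ≠ 0) and any 1-form ψ = a·x + b·y + e·z (a,b,e ∈ ℝ), if the bilinear form h'(U,V) := Ω'(J_δU, V) associated to Ω' = -t∧ψ + dψ is symmetric and positive definite, then b = e = 0 and a·c > 0. -/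
/-- On 𝔤 = ℝT ⊕ 𝔰𝔲(2) with complex structure J_δ (c ≠ 0), if the bilinear form
h'(U,V) = Ω'(J_δU,V) associated to Ω' = -t∧ψ + dψ with ψ = a·x + b·y + e·z is
symmetric and positive definite, then b = e = 0 and a·c > 0. -/
theorem u2_lck_forms_unique
    (L : Type) [LieRing L] [LieAlgebra ℝ L] (bs : Module.Basis (Fin 4) ℝ L)
    (hT : ∀ U : L, ⁅bs 0, U⁆ = 0)
    (hXY : ⁅bs 1, bs 2⁆ = bs 3) (hYZ : ⁅bs 2, bs 3⁆ = bs 1)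
    (hZX : ⁅bs 3, bs 1⁆ = bs 2)
    (c d : ℝ) (hc : c ≠ 0)
    (J : L →ₗ[ℝ] L)
    (hJ1 : J (bs 0 - d • bs 1) = c • bs 1)
    (hJ2 : J (c • bs 1) = -(bs 0 - d • bs 1))
    (hJ3 : J (bs 2) = bs 3) (hJ4 : J (bs 3) = -bs 2)
    (a b e : ℝ)
    (ψ : L → ℝ)
    (hψ : ∀ U : L, ψ U = a * bs.coord 1 U + b * bs.coord 2 U + e * bs.coord 3 U)
    (Ω' : L → L → ℝ)
    (hΩ' : ∀ U V : L, Ω' U V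
      = -(bs.coord 0 U * ψ V - bs.coord 0 V * ψ U) + -(ψ ⁅U, V⁆))
    (h' : L → L → ℝ) (hh' : ∀ U V : L, h' U V = Ω' (J U) V)
    (hsym : ∀ U V : L, h' U V = h' V U)
    (hpos : ∀ U : L, U ≠ 0 → 0 < h' U U) :
    b = 0 ∧ e = 0 ∧ 0 < a * c := by
  -- J on bs 1
  have hJbs1 : J (bs 1) = (-c⁻¹) • bs 0 + (c⁻¹ * d) • bs 1 := by
    have h := hJ2
    rw [map_smul] at h
    have h2 := congrArg (fun v => c⁻¹ • v) h
    simp only [smul_smul, inv_mul_cancel₀ hc, one_smul] at h2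
    rw [h2]; module
  -- J on bs 0
  have hJbs0 : J (bs 0) = (-(c⁻¹ * d)) • bs 0 + (c + c⁻¹ * d * d) • bs 1 := by
    have h1 : J (bs 0) - d • J (bs 1) = c • bs 1 := by
      rw [← map_smul, ← map_sub, hJ1]
    have h2 : J (bs 0) = c • bs 1 + d • J (bs 1) := by
      rw [← h1]; module
    rw [h2, hJbs1]; module
  -- bracket facts
  have hbr0 : ∀ U : L, ⁅U, bs 0⁆ = 0 := fun U => by
    rw [← neg_eq_zero, lie_skew, hT]
  have hYX : ⁅bs 2, bs 1⁆ = -bs 3 := by rw [← hXY, ← lie_skew]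
  have hZY : ⁅bs 3, bs 2⁆ = -bs 1 := by rw [← hYZ, ← lie_skew]
  have hXZ : ⁅bs 1, bs 3⁆ = -bs 2 := by rw [← hZX, ← lie_skew]
  -- coordinate values
  have hco : ∀ i j : Fin 4, bs.coord i (bs j) = if j = i then 1 else 0 := by
    intro i j
    simp [Module.Basis.coord_apply, Module.Basis.repr_self, Finsupp.single_apply]
  -- ψ on basis vectors
  have hψ0 : ψ (bs 0) = 0 := by simp [hψ, hco]
  have hψ1 : ψ (bs 1) = a := by simp [hψ, hco]
  have hψ2 : ψ (bs 2) = b := by simp [hψ, hco]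
  have hψ3 : ψ (bs 3) = e := by simp [hψ, hco]
  have hψz : ψ 0 = 0 := by simp [hψ]
  have hψneg : ∀ U : L, ψ (-U) = -ψ U := by intro U; simp [hψ]; ring
  -- a > 0 from positivity at bs 2
  have h22 : h' (bs 2) (bs 2) = a := by
    rw [hh', hJ3, hΩ' , hZY, hψneg, hψ1, hψ2, hψ3]
    simp [hco]
  have ha : 0 < a := h22 ▸ hpos (bs 2) (bs.ne_zero 2)
  -- h'(T,T) > 0 gives c > 0
  have h00 : h' (bs 0) (bs 0) = (c + c⁻¹ * d * d) * a := by
    rw [hh', hJbs0, hΩ']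
    have hbr : ⁅(-(c⁻¹ * d)) • bs 0 + (c + c⁻¹ * d * d) • bs 1, bs 0⁆ = 0 := hbr0 _
    rw [hbr, hψz]
    have hcoJ : bs.coord 0 ((-(c⁻¹ * d)) • bs 0 + (c + c⁻¹ * d * d) • bs 1)
        = -(c⁻¹ * d) := by simp [map_add, map_smul, hco]
    have hψJ : ψ ((-(c⁻¹ * d)) • bs 0 + (c + c⁻¹ * d * d) • bs 1)
        = (c + c⁻¹ * d * d) * a := by simp [hψ, map_add, map_smul, hco]; ring
    rw [hcoJ, hψJ, hψ0]
    simp [hco]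
  have hc0 : 0 < c := by
    have hp := h00 ▸ hpos (bs 0) (bs.ne_zero 0)
    rcases lt_or_gt_of_ne hc with hneg | hposc
    · exfalso
      have h1 : c + c⁻¹ * d * d ≤ 0 := by
        have : c⁻¹ < 0 := inv_neg''.mpr hneg
        nlinarith [sq_nonneg d]
      nlinarith
    · exact hposc
  -- symmetry equation from (X, Y)
  have h12 : h' (bs 1) (bs 2) = c⁻¹ * b - c⁻¹ * d * e := by
    rw [hh', hJbs1, hΩ']
    have hbr : ⁅(-c⁻¹) • bs 0 + (c⁻¹ * d) • bs 1, bs 2⁆ = (c⁻¹ * d) • bs 3 := by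
      rw [add_lie, smul_lie, smul_lie, hT, hXY, smul_zero, zero_add]
    rw [hbr]
    have hψbr : ψ ((c⁻¹ * d) • bs 3) = c⁻¹ * d * e := by
      simp [hψ, map_smul, hco]; ring
    have hcoJ : bs.coord 0 ((-c⁻¹) • bs 0 + (c⁻¹ * d) • bs 1) = -c⁻¹ := by
      simp [map_add, map_smul, hco]
    have hψJ : ψ ((-c⁻¹) • bs 0 + (c⁻¹ * d) • bs 1) = c⁻¹ * d * a := by
      simp [hψ, map_add, map_smul, hco]; ring
    rw [hψbr, hcoJ, hψJ, hψ2]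
    simp [hco]; ring
  have h21 : h' (bs 2) (bs 1) = -b := by
    rw [hh', hJ3, hΩ', hZX, hψ2]
    simp [hco]
  have eqC : (1 + c) * b = d * e := by
    have := hsym (bs 1) (bs 2)
    rw [h12, h21] at this
    field_simp at this
    linarith
  -- symmetry equation from (X, Z)
  have h13 : h' (bs 1) (bs 3) = c⁻¹ * e + c⁻¹ * d * b := by
    rw [hh', hJbs1, hΩ']
    have hbr : ⁅(-c⁻¹) • bs 0 + (c⁻¹ * d) • bs 1, bs 3⁆ = (c⁻¹ * d) • (-bs 2) := by
      rw [add_lie, smul_lie, smul_lie, hT, hXZ, smul_zero, zero_add]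
    rw [hbr]
    have hψbr : ψ ((c⁻¹ * d) • (-bs 2 : L)) = -(c⁻¹ * d * b) := by
      simp [hψ, map_smul, map_neg, hco]; ring
    have hcoJ : bs.coord 0 ((-c⁻¹) • bs 0 + (c⁻¹ * d) • bs 1) = -c⁻¹ := by
      simp [map_add, map_smul, hco]
    have hψJ : ψ ((-c⁻¹) • bs 0 + (c⁻¹ * d) • bs 1) = c⁻¹ * d * a := by
      simp [hψ, map_add, map_smul, hco]; ring
    rw [hψbr, hcoJ, hψJ, hψ3]
    simp [hco]
    try ring
  have h31 : h' (bs 3) (bs 1) = -e := by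
    rw [hh', hJ4, hΩ']
    have hbr : ⁅(-bs 2 : L), bs 1⁆ = bs 3 := by rw [neg_lie, hYX, neg_neg]
    rw [hbr]
    simp [hψ, map_neg, hco]
  have eqD : (1 + c) * e = -(d * b) := by
    have := hsym (bs 1) (bs 3)
    rw [h13, h31] at this
    field_simp at this
    linarith
  -- conclude
  have hb : b = 0 := by
    have key : ((1 + c) ^ 2 + d ^ 2) * b = 0 := by linear_combination (1 + c) * eqC + d * eqD
    have hpos' : 0 < (1 + c) ^ 2 + d ^ 2 :=
      add_pos_of_pos_of_nonneg (pow_pos (by linarith) 2) (sq_nonneg d)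
    exact (mul_eq_zero.mp key).resolve_left (ne_of_gt hpos')
  have he : e = 0 := by
    have : (1 + c) * e = 0 := by rw [eqD, hb]; ring
    have h1c : (1 + c) ≠ 0 := by positivity
    exact (mul_eq_zero.mp this).resolve_left h1c
  exact ⟨hb, he, mul_pos ha hc0⟩
end

section
/- Let 𝔤 = ℝW ⊕ 𝔰𝔩(2,ℝ) with W central and [X,Y] = -Z, [Z,X] = Y, [Z,Y] = -X, dual basis w,x,y,z, and J as: JY = X, JX = -Y, JW = Z, JZ = -W. The 2-form Ω = z∧w + x∧y satisfies dΩ = w∧Ω, i.e. Ω is an l.c.K. form on 𝔤 with Lee form θ = w. -/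
/-- On 𝔤 = ℝW ⊕ 𝔰𝔩(2,ℝ) with dual basis w,x,y,z, the 2-form
Ω = z∧w + x∧y satisfies dΩ = w∧Ω, i.e. Ω is an l.c.K. form with Lee form w. -/
theorem sl2_lck_equation
    (L : Type) [LieRing L] [LieAlgebra ℝ L] (bs : Module.Basis (Fin 4) ℝ L)
    (hW : ∀ U : L, ⁅bs 0, U⁆ = 0)
    (hXY : ⁅bs 1, bs 2⁆ = -bs 3) (hZX : ⁅bs 3, bs 1⁆ = bs 2)
    (hZY : ⁅bs 3, bs 2⁆ = -bs 1)
    (Ω : L → L → ℝ)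
    (hΩ : ∀ U V : L, Ω U V
      = (bs.coord 3 U * bs.coord 0 V - bs.coord 3 V * bs.coord 0 U)
        + (bs.coord 1 U * bs.coord 2 V - bs.coord 1 V * bs.coord 2 U)) :
    ∀ U V W : L,
      -(Ω ⁅U, V⁆ W) + Ω ⁅U, W⁆ V - Ω ⁅V, W⁆ U
        = bs.coord 0 U * Ω V W - bs.coord 0 V * Ω U W + bs.coord 0 W * Ω U V := by
  have hW' : ∀ U : L, ⁅U, bs 0⁆ = 0 := by
    intro U
    rw [← lie_skew, hW, neg_zero]
  have hYX : ⁅bs 2, bs 1⁆ = bs 3 := by rw [← lie_skew, hXY, neg_neg]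
  have hXZ : ⁅bs 1, bs 3⁆ = -bs 2 := by rw [← lie_skew, hZX]
  have hYZ : ⁅bs 2, bs 3⁆ = bs 1 := by rw [← lie_skew, hZY, neg_neg]
  have brk : ∀ U V : L, ⁅U, V⁆ =
      (-(bs.repr U 3 * bs.repr V 2 - bs.repr U 2 * bs.repr V 3)) • bs 1
      + (bs.repr U 3 * bs.repr V 1 - bs.repr U 1 * bs.repr V 3) • bs 2
      + (-(bs.repr U 1 * bs.repr V 2 - bs.repr U 2 * bs.repr V 1)) • bs 3 := by
    intro U V
    have hrep : ∀ X : L, X = bs.repr X 0 • bs 0 + bs.repr X 1 • bs 1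
        + bs.repr X 2 • bs 2 + bs.repr X 3 • bs 3 := by
      intro X
      have h := bs.sum_repr X
      rw [Fin.sum_univ_four] at h
      exact h.symm
    conv_lhs => rw [hrep U, hrep V]
    simp only [add_lie, lie_add, smul_lie, lie_smul,
      lie_self, hW, hW', hXY, hZX, hZY, hYX, hXZ, hYZ, smul_zero, smul_neg, zero_add, add_zero]
    module
  have hc : ∀ (k : Fin 4) (U V : L), bs.coord k ⁅U, V⁆ =
      (-(bs.repr U 3 * bs.repr V 2 - bs.repr U 2 * bs.repr V 3)) * (bs.repr (bs 1) k)
      + (bs.repr U 3 * bs.repr V 1 - bs.repr U 1 * bs.repr V 3) * (bs.repr (bs 2) k)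
      + (-(bs.repr U 1 * bs.repr V 2 - bs.repr U 2 * bs.repr V 1)) * (bs.repr (bs 3) k) := by
    intro k U V
    rw [brk]
    simp only [map_add, map_smul, Module.Basis.coord_apply, smul_eq_mul]
  have h0 : ∀ U V : L, bs.coord 0 ⁅U, V⁆ = 0 := by
    intro U V; rw [hc]; simp [Module.Basis.repr_self, Finsupp.single_apply]
  have h1 : ∀ U V : L, bs.coord 1 ⁅U, V⁆
      = -(bs.repr U 3 * bs.repr V 2 - bs.repr U 2 * bs.repr V 3) := by
    intro U V; rw [hc]; simp [Module.Basis.repr_self, Finsupp.single_apply]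
  have h2 : ∀ U V : L, bs.coord 2 ⁅U, V⁆
      = bs.repr U 3 * bs.repr V 1 - bs.repr U 1 * bs.repr V 3 := by
    intro U V; rw [hc]; simp [Module.Basis.repr_self, Finsupp.single_apply]
  have h3 : ∀ U V : L, bs.coord 3 ⁅U, V⁆
      = -(bs.repr U 1 * bs.repr V 2 - bs.repr U 2 * bs.repr V 1) := by
    intro U V; rw [hc]; simp [Module.Basis.repr_self, Finsupp.single_apply]
  intro U V W
  simp only [hΩ, h0, h1, h2, h3, Module.Basis.coord_apply]
  ring
end

section
/- In 𝔤 = ℝW ⊕ 𝔰𝔩(2,ℝ) with brackets [X,Y] = -Z, [Z,X] = Y, [Z,Y] = -X and W central, let b > c > 0 with b² - c² = b, ψ = b·y + c·z, θ = w, and Ω_ψ = ψ∧w + dψ, with metric h(U,V) = Ω_ψ(JU,V) for J given by JY = X, JX = -Y, JW = Z, JZ = -W. Then the Lee field ξ = (1/(b²-c²))(bW + cX) is not a Killing field: there exist U,V ∈ 𝔤 with h([ξ,U],V) + h(U,[ξ,V]) ≠ 0. -/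
/-- On 𝔤 = ℝW ⊕ 𝔰𝔩(2,ℝ) with b > c > 0, b² - c² = b, ψ = b·y + c·z,
Ω_ψ = ψ∧w + dψ and h(U,V) = Ω_ψ(JU,V), the Lee field
ξ = (1/(b²-c²))(bW + cX) is not Killing: h([ξ,U],V) + h(U,[ξ,V]) ≠ 0 for
some U,V (a non-Vaisman l.c.K. structure). -/
theorem sl2_lck_not_vaisman
    (L : Type) [LieRing L] [LieAlgebra ℝ L] (bs : Module.Basis (Fin 4) ℝ L)
    (hW : ∀ U : L, ⁅bs 0, U⁆ = 0)
    (hXY : ⁅bs 1, bs 2⁆ = -bs 3) (hZX : ⁅bs 3, bs 1⁆ = bs 2)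
    (hZY : ⁅bs 3, bs 2⁆ = -bs 1)
    (J : L →ₗ[ℝ] L)
    (hJY : J (bs 2) = bs 1) (hJX : J (bs 1) = -bs 2)
    (hJW : J (bs 0) = bs 3) (hJZ : J (bs 3) = -bs 0)
    (b c : ℝ) (hbc : b > c) (hc0 : c > 0) (hb : b ^ 2 - c ^ 2 = b)
    (ψ : L → ℝ) (hψ : ∀ U : L, ψ U = b * bs.coord 2 U + c * bs.coord 3 U)
    (Ω : L → L → ℝ)
    (hΩ : ∀ U V : L, Ω U V
      = (ψ U * bs.coord 0 V - ψ V * bs.coord 0 U) + -(ψ ⁅U, V⁆))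
    (h : L → L → ℝ) (hh : ∀ U V : L, h U V = Ω (J U) V)
    (ξ : L) (hξ : ξ = (1 / (b ^ 2 - c ^ 2)) • (b • bs 0 + c • bs 1)) :
    ∃ U V : L, h ⁅ξ, U⁆ V + h U ⁅ξ, V⁆ ≠ 0 := by
  have hb0 : b ≠ 0 := by nlinarith
  -- the bracket ⁅ξ, Y⁆ = -(c/b) • Z
  have hbr : ⁅ξ, bs 2⁆ = (-(c / b)) • bs 3 := by
    rw [hξ, hb, smul_lie, add_lie, smul_lie, smul_lie, hW, hXY, smul_zero,
      zero_add, smul_smul, smul_neg, ← neg_smul]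
    congr 1
    field_simp
  -- J of that bracket
  have hJbr : J ⁅ξ, bs 2⁆ = (c / b) • bs 0 := by
    rw [hbr, map_smul, hJZ, smul_neg, neg_smul, neg_neg]
  -- ψ vanishes on multiples of W
  have hψW : ∀ t : ℝ, ψ (t • bs 0) = 0 := by
    intro t
    rw [hψ, map_smul, map_smul]
    simp [Module.Basis.coord_apply]
  have hψY : ψ (bs 2) = b := by
    rw [hψ]; simp [Module.Basis.coord_apply]
  have hcoord0Y : bs.coord 0 (bs 2) = 0 := by simp [Module.Basis.coord_apply]
  have hcoord0 : bs.coord 0 ((c / b) • bs 0) = c / b := by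
    rw [map_smul]; simp [Module.Basis.coord_apply]
  have hbr0 : ⁅(c / b : ℝ) • bs 0, bs 2⁆ = (0 : L) := by
    rw [smul_lie, hW, smul_zero]
  have hψ0 : ψ (0 : L) = 0 := by rw [hψ]; simp
  have hval : h ⁅ξ, bs 2⁆ (bs 2) = -c := by
    rw [hh, hJbr, hΩ, hψW, hbr0, hψ0, hψY, hcoord0Y, hcoord0]
    field_simp
    ring
  have hval2 : h (bs 2) ⁅ξ, bs 2⁆ = -c := by
    have hψX : ψ (bs 1) = 0 := by rw [hψ]; simp [Module.Basis.coord_apply]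
    rw [hh, hJY, hΩ, hbr, hψX]
    have e1 : bs.coord 0 ((-(c / b)) • bs 3) = 0 := by
      rw [map_smul]; simp [Module.Basis.coord_apply]
    have e2 : ψ ((-(c / b)) • bs 3) = -(c / b) * c := by
      rw [hψ, map_smul, map_smul]
      simp [Module.Basis.coord_apply]
      ring
    have e3 : ⁅bs 1, (-(c / b)) • bs 3⁆ = (c / b) • bs 2 := by
      rw [lie_smul]
      have : ⁅bs 1, bs 3⁆ = -bs 2 := by
        rw [← lie_skew, hZX]
      rw [this, smul_neg, neg_smul, neg_neg]
    have e4 : ψ ((c / b : ℝ) • bs 2) = c / b * b := by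
      rw [hψ, map_smul, map_smul]
      simp [Module.Basis.coord_apply]
      ring
    have e5 : bs.coord 0 (bs 1) = 0 := by simp [Module.Basis.coord_apply]
    rw [e1, e2, e3, e4, e5]
    field_simp
    ring
  refine ⟨bs 2, bs 2, ?_⟩
  rw [hval, hval2]
  intro habs
  nlinarith
end
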